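/- Let φ : ℤ_p → ℂ_p be continuous. The map ℤ_p → C(ℤ_p, ℂ_p), y ↦ S^y(φ), is continuous with respect to the sup-norm on C(ℤ_p, ℂ_p). -/

import Mathlib

open Finset

/-- `(x choose k)` on `ℤ_p`, valued in a normed `ℚ_p`-algebra `K` (modelling `ℂ_p`). -/
noncomputable def padicBinom (p : ℕ) [Fact p.Prime] (K : Type*) [NormedField K]
    [NormedAlgebra ℚ_[p] K] (x : ℤ_[p]) (k : ℕ) : K :=
  algebraMap ℚ_[p] K ((∏ i ∈ Finset.range k, ((x : ℚ_[p]) - (i : ℚ_[p]))) / (k.factorial : ℚ_[p]))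

/-- The operator `S^y`, `S^y(φ)(x) = ∑_{k≥0} (-1)^k k! (y choose k)(x choose k) φ(x-k)`. -/
noncomputable def Sop (p : ℕ) [Fact p.Prime] {K : Type*} [NormedField K]
    [NormedAlgebra ℚ_[p] K] (y : ℤ_[p]) (φ : ℤ_[p] → K) : ℤ_[p] → K :=
  fun x => ∑' k : ℕ,
    (-1 : K) ^ k * (k.factorial : K) * padicBinom p K y k * padicBinom p K x k * φ (x - (k : ℤ_[p]))

section aux

variable (p : ℕ) [Fact p.Prime]

lemma descPoch_prod (R : Type*) [CommRing R] (x : R) (k : ℕ) :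
    (descPochhammer R k).eval x = ∏ i ∈ Finset.range k, (x - (i : R)) := by
  induction k with
  | zero => simp
  | succ n ih => rw [descPochhammer_succ_eval, ih, Finset.prod_range_succ]

lemma prod_norm_le (x : ℤ_[p]) (k : ℕ) :
    ‖∏ i ∈ Finset.range k, ((x : ℚ_[p]) - (i : ℚ_[p]))‖ ≤ ‖(k.factorial : ℚ_[p])‖ := by
  have h1 : (((∏ i ∈ Finset.range k, (x - (i : ℤ_[p]))) : ℤ_[p]) : ℚ_[p])
      = ∏ i ∈ Finset.range k, ((x : ℚ_[p]) - (i : ℚ_[p])) := by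
    induction k with
    | zero => simp
    | succ n ih =>
      rw [Finset.prod_range_succ, Finset.prod_range_succ, PadicInt.coe_mul, ih,
        PadicInt.coe_sub, PadicInt.coe_natCast]
  rw [← h1, ← PadicInt.norm_def]
  have h2 : ‖(k.factorial : ℚ_[p])‖ = ‖(k.factorial : ℤ_[p])‖ := by
    rw [PadicInt.norm_def, PadicInt.coe_natCast]
  rw [h2, ← descPoch_prod, descPochhammer_eval_eq_ascPochhammer]
  exact PadicInt.norm_ascPochhammer_le k _

lemma norm_padicBinom_le (K : Type*) [NormedField K] [NormedAlgebra ℚ_[p] K]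
    (x : ℤ_[p]) (k : ℕ) : ‖padicBinom p K x k‖ ≤ 1 := by
  rw [padicBinom, norm_algebraMap', norm_div]
  have h : (0:ℝ) < ‖(k.factorial : ℚ_[p])‖ := by
    rw [norm_pos_iff]
    exact_mod_cast k.factorial_ne_zero
  rw [div_le_one h]
  exact prod_norm_le p x k

lemma norm_factorial_le (k : ℕ) :
    ‖(k.factorial : ℚ_[p])‖ ≤ ((p : ℝ)⁻¹) ^ (k / p) := by
  have hd : (p : ℕ) ^ (k / p) ∣ k.factorial := by
    refine dvd_trans (pow_dvd_pow _ ?_) pow_padicValNat_dvd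
    rw [padicValNat_factorial (n := k) (b := max (Nat.log p k) 1 + 1)
      (Nat.lt_succ_of_le (le_max_left _ _))]
    have h1 : 1 ∈ Finset.Ico 1 (max (Nat.log p k) 1 + 1) := by
      simp [Nat.lt_succ_of_le]
    simpa using Finset.single_le_sum (f := fun i => k / p ^ i)
      (fun i _ => Nat.zero_le _) h1
  obtain ⟨c, hc⟩ := hd
  have hcast : ((k.factorial : ℚ_[p])) = (p : ℚ_[p]) ^ (k / p) * (c : ℚ_[p]) := by
    exact_mod_cast congrArg (Nat.cast : ℕ → ℚ_[p]) hc
  rw [hcast, norm_mul, norm_pow, Padic.norm_p]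
  have hc1 : ‖(c : ℚ_[p])‖ ≤ 1 := by
    have := Padic.norm_int_le_one (p := p) (c : ℤ)
    simpa using this
  exact mul_le_of_le_one_right (by positivity) hc1

lemma summable_aux : Summable (fun k : ℕ => ((p : ℝ)⁻¹) ^ (k / p)) := by
  have hp1 : (1:ℕ) < p := (Fact.out : p.Prime).one_lt
  have hr : ((p:ℝ)⁻¹) < 1 := by
    rw [inv_lt_one_iff₀]; right; exact_mod_cast hp1
  have hr0 : (0:ℝ) ≤ (p:ℝ)⁻¹ := by positivity
  haveI : NeZero p := ⟨(Fact.out : p.Prime).ne_zero⟩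
  have h : Summable (fun q : ℕ × Fin p => ((p : ℝ)⁻¹) ^ q.1) := by
    have h1 : Summable (fun m : ℕ => ((p : ℝ)⁻¹) ^ m) := summable_geometric_of_lt_one hr0 hr
    have h2 : Summable (fun _ : Fin p => (1:ℝ)) := summable_of_finite_support (Set.toFinite _)
    have := h1.mul_of_nonneg h2 (fun m => by positivity) (fun _ => zero_le_one)
    simpa using this
  have := ((Nat.divModEquiv p).symm.summable_iff
    (f := fun k : ℕ => ((p : ℝ)⁻¹) ^ (k / p))).1
  apply this
  convert h using 1
  ext ⟨a, b⟩
  have hq : (a * p + (b:ℕ)) / p = a := by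
    rw [mul_comm, Nat.mul_add_div (by omega)]
    simp [Nat.div_eq_of_lt b.2]
  simp [Nat.divModEquiv, hq]
end aux

/-- For continuous `φ : ℤ_p → ℂ_p`, the map `y ↦ S^y(φ)` is a continuous map
`ℤ_p → C(ℤ_p, ℂ_p)` for the sup-norm topology. -/
theorem continuous_Sop_in_exponent (p : ℕ) [Fact p.Prime] (K : Type*) [NontriviallyNormedField K]
    [NormedAlgebra ℚ_[p] K] [IsUltrametricDist K] [CompleteSpace K]
    (φ : ℤ_[p] → K) (hφ : Continuous φ) :
    ∃ F : ℤ_[p] → C(ℤ_[p], K),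
      (∀ y x : ℤ_[p], F y x = Sop p y φ x) ∧ Continuous F := by
  have hcoe : Continuous ((↑) : ℤ_[p] → ℚ_[p]) := continuous_subtype_val
  set Φ : C(ℤ_[p], K) := ⟨φ, hφ⟩ with hΦ
  have hbin : ∀ k : ℕ, Continuous fun x : ℤ_[p] => padicBinom p K x k := by
    intro k
    apply (continuous_algebraMap ℚ_[p] K).comp
    exact ((continuous_finset_prod _ fun i _ => hcoe.sub continuous_const).div_const _)
  have hcont : ∀ k : ℕ, Continuous (fun q : ℤ_[p] × ℤ_[p] =>
      (-1 : K) ^ k * (k.factorial : K) * padicBinom p K q.1 k * padicBinom p K q.2 k *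
        φ (q.2 - (k : ℤ_[p]))) := by
    intro k
    exact ((((continuous_const.mul ((hbin k).comp continuous_fst)).mul
      ((hbin k).comp continuous_snd)).mul
      (hφ.comp (continuous_snd.sub continuous_const))))
  let T : ℕ → C(ℤ_[p], C(ℤ_[p], K)) := fun k => ContinuousMap.curry ⟨_, hcont k⟩
  let u : ℕ → ℝ := fun k => ‖Φ‖ * ((p : ℝ)⁻¹) ^ (k / p)
  have hu : Summable u := (summable_aux p).mul_left _
  have hbound : ∀ (k : ℕ) (y x : ℤ_[p]),
      ‖(-1 : K) ^ k * (k.factorial : K) * padicBinom p K y k * padicBinom p K x k *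
        φ (x - (k : ℤ_[p]))‖ ≤ u k := by
    intro k y x
    rw [norm_mul, norm_mul, norm_mul, norm_mul, norm_pow, norm_neg, norm_one, one_pow, one_mul]
    have h1 : ‖(k.factorial : K)‖ ≤ ((p : ℝ)⁻¹) ^ (k / p) := by
      have : ((k.factorial : ℕ) : K) = algebraMap ℚ_[p] K (k.factorial : ℚ_[p]) := by
        rw [map_natCast]
      rw [this, norm_algebraMap']
      exact norm_factorial_le p k
    have h2 : ‖φ (x - (k : ℤ_[p]))‖ ≤ ‖Φ‖ := Φ.norm_coe_le_norm _
    calc ‖(k.factorial : K)‖ * ‖padicBinom p K y k‖ * ‖padicBinom p K x k‖ *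
          ‖φ (x - (k : ℤ_[p]))‖
        ≤ ((p : ℝ)⁻¹) ^ (k / p) * 1 * 1 * ‖Φ‖ := by
          refine mul_le_mul (mul_le_mul (mul_le_mul h1 (norm_padicBinom_le p K y k)
            (norm_nonneg _) (by positivity)) (norm_padicBinom_le p K x k)
            (norm_nonneg _) (by positivity)) h2 (norm_nonneg _) (by positivity)
      _ = u k := by ring
  have hT : ∀ (k : ℕ) (y : ℤ_[p]), ‖T k y‖ ≤ u k := by
    intro k y
    refine (ContinuousMap.norm_le _ ?_).2 fun x => hbound k y x
    have : (0:ℝ) ≤ ‖Φ‖ := norm_nonneg _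
    positivity
  refine ⟨fun y => ∑' k, T k y, ?_, ?_⟩
  · intro y x
    have hs : Summable fun k => T k y :=
      Summable.of_norm_bounded hu fun k => hT k y
    have := ((ContinuousMap.evalCLM (R := K) x).map_tsum hs)
    simp only [ContinuousMap.evalCLM] at this
    calc (∑' k, T k y) x = ∑' k, (T k y) x := by
          exact_mod_cast this
      _ = Sop p y φ x := rfl
  · exact continuous_tsum (fun k => (T k).continuous) hu fun k y => hT k y
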